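/- arXiv:math/0305312 — 2 statements merged into one kernel-verified Lean document; each statement's English description precedes it below -/
import Mathlib

section
/- Let V be a 6-dimensional real vector space, ω an alternating 3-form on V with Δ(ω) = {0}, and J a complex structure on V such that ω is pure with respect to J. If A : V → V is a linear map such that ω(Av₁,v₂,v₃) = ω(v₁,Av₂,v₃) = ω(v₁,v₂,Av₃) for all v₁,v₂,v₃ ∈ V, then A = λ₀·id_V + λ₁·J for some real numbers λ₀, λ₁; if in addition A∘J + J∘A = 0, then A = 0. -/
open scoped TensorProduct

/-- The wedge product of real-valued alternating forms
(antisymmetrized shuffle-sum convention, via `AlternatingMap.domCoprod`). -/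
noncomputable def wedge {V : Type*} [AddCommGroup V] [Module ℝ V] {p q : ℕ}
    (α : V [⋀^Fin p]→ₗ[ℝ] ℝ) (β : V [⋀^Fin q]→ₗ[ℝ] ℝ) : V [⋀^Fin (p + q)]→ₗ[ℝ] ℝ :=
  ((LinearMap.mul' ℝ ℝ).compAlternatingMap (α.domCoprod β)).domDomCongr finSumFinEquiv

/-- The interior product `ι_v ω = ω(v, ·, …, ·)`. -/
noncomputable def iota {V : Type*} [AddCommGroup V] [Module ℝ V] {n : ℕ}
    (v : V) (ω : V [⋀^Fin (n + 1)]→ₗ[ℝ] ℝ) : V [⋀^Fin n]→ₗ[ℝ] ℝ :=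
  ω.curryLeft v

/-- `Δ(ω) = {v ∈ V : (ι_v ω) ∧ (ι_v ω) = 0}` for a 3-form `ω`. -/
noncomputable def Delta {V : Type*} [AddCommGroup V] [Module ℝ V]
    (ω : V [⋀^Fin 3]→ₗ[ℝ] ℝ) : Set V :=
  {v | wedge (iota v ω) (iota v ω) = 0}

/-- A form is multisymplectic iff `v ↦ ι_v ω` is injective. -/
noncomputable def Multisymplectic {V : Type*} [AddCommGroup V] [Module ℝ V] {n : ℕ}
    (ω : V [⋀^Fin (n + 1)]→ₗ[ℝ] ℝ) : Prop :=
  Function.Injective fun v : V => iota v ω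

/- ### Auxiliary lemmas -/

lemma wedge_apply_eq_zero_of_ker {V : Type*} [AddCommGroup V] [Module ℝ V]
    (β : V [⋀^Fin 2]→ₗ[ℝ] ℝ) (x : Fin (2+2) → V) (j : Fin (2+2))
    (h : ∀ w, β ![x j, w] = 0) : wedge β β x = 0 := by
  set y : Fin 2 ⊕ Fin 2 → V := x ∘ finSumFinEquiv with hy
  set s : Fin 2 ⊕ Fin 2 := finSumFinEquiv.symm j with hsdef
  have hys : y s = x j := by simp [hy, hsdef]
  have hswap : ∀ a b : V, β ![a, b] = - β ![b, a] := by
    intro a b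
    have := β.map_swap ![b, a] (i := 0) (j := 1) (by decide)
    have h2 : (![b, a] ∘ Equiv.swap (0:Fin 2) 1) = ![a, b] := by
      funext k; fin_cases k <;> simp [Equiv.swap_apply_of_ne_of_ne]
    rw [h2] at this
    linarith
  have hβ : ∀ u : Fin 2 → V, (∃ i, u i = x j) → β u = 0 := by
    rintro u ⟨i, hi⟩
    have hu : u = ![u 0, u 1] := funext fun k => by fin_cases k <;> rfl
    fin_cases i
    · rw [hu]
      have h0 : u 0 = x j := hi
      rw [h0, h _]
    · rw [hu]
      have h1 : u 1 = x j := hi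
      rw [h1, hswap, h _, neg_zero]
  have halt : MultilinearMap.alternatization
      (MultilinearMap.domCoprod (β : MultilinearMap ℝ (fun _ : Fin 2 => V) ℝ)
        (β : MultilinearMap ℝ (fun _ : Fin 2 => V) ℝ)) y = (0 : ℝ ⊗[ℝ] ℝ) := by
    rw [MultilinearMap.alternatization_apply]
    refine Finset.sum_eq_zero fun σ _ => ?_
    rw [MultilinearMap.domDomCongr_apply, MultilinearMap.domCoprod_apply]
    simp only [AlternatingMap.coe_multilinearMap]
    rcases hs : σ.symm s with i | i
    · have : β (fun i₁ => y (σ (Sum.inl i₁))) = 0 := by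
        refine hβ _ ⟨i, ?_⟩
        rw [← hs, Equiv.apply_symm_apply, hys]
      rw [this, TensorProduct.zero_tmul, smul_zero]
    · have : β (fun i₂ => y (σ (Sum.inr i₂))) = 0 := by
        refine hβ _ ⟨i, ?_⟩
        rw [← hs, Equiv.apply_symm_apply, hys]
      rw [this, TensorProduct.tmul_zero, smul_zero]
  have h4 : ((β.domCoprod β) y) = (0 : ℝ ⊗[ℝ] ℝ) := by
    have heq := MultilinearMap.domCoprod_alternization_eq β β
    rw [heq] at halt
    have h44 : ((Fintype.card (Fin 2)).factorial * (Fintype.card (Fin 2)).factorial) = 4 := by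
      decide
    rw [h44] at halt
    simp only [AlternatingMap.smul_apply] at halt
    rw [← Nat.cast_smul_eq_nsmul ℝ 4] at halt
    simpa using halt
  show (LinearMap.mul' ℝ ℝ) ((β.domCoprod β) (x ∘ finSumFinEquiv)) = 0
  rw [← hy, h4, map_zero]

lemma wedge_self_eq_zero_of_kernel {V : Type*} [AddCommGroup V] [Module ℝ V]
    [FiniteDimensional ℝ V] (hV : Module.finrank ℝ V = 6)
    (β : V [⋀^Fin 2]→ₗ[ℝ] ℝ) (K : Submodule ℝ V)
    (hK : ∀ u ∈ K, ∀ w, β ![u, w] = 0) (hdim : 3 ≤ Module.finrank ℝ K) :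
    wedge β β = 0 := by
  ext x
  rw [AlternatingMap.zero_apply]
  by_cases hind : LinearIndependent ℝ x
  · set W := Submodule.span ℝ (Set.range x) with hW
    have hWrank : Module.finrank ℝ W = 4 := by
      rw [hW, finrank_span_eq_card hind]; simp
    have hsum := Submodule.finrank_sup_add_finrank_inf_eq W K
    have hle : Module.finrank ℝ ↥(W ⊔ K) ≤ 6 := hV ▸ Submodule.finrank_le _
    have hpos : 0 < Module.finrank ℝ ↥(W ⊓ K) := by omega
    have hne : (W ⊓ K) ≠ ⊥ := by
      intro hbot
      rw [hbot, finrank_bot] at hpos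
      omega
    obtain ⟨u, hu, hune⟩ := Submodule.exists_mem_ne_zero_of_ne_bot hne
    have huW : u ∈ W := (Submodule.mem_inf.mp hu).1
    have huK : u ∈ K := (Submodule.mem_inf.mp hu).2
    obtain ⟨c, hc⟩ := (Submodule.mem_span_range_iff_exists_fun ℝ).mp huW
    obtain ⟨j, hj⟩ : ∃ j, c j ≠ 0 := by
      by_contra hall
      push_neg at hall
      apply hune
      rw [← hc]
      simp [hall]
    have h0 : wedge β β (Function.update x j u) = 0 := by
      apply wedge_apply_eq_zero_of_ker _ _ j
      intro w
      rw [Function.update_self]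
      exact hK u huK w
    rw [← hc] at h0
    rw [(wedge β β).map_update_sum] at h0
    have hterm : ∀ i ∈ Finset.univ, i ≠ j →
        wedge β β (Function.update x j (c i • x i)) = 0 := by
      intro i _ hij
      rw [AlternatingMap.map_update_smul]
      rw [(wedge β β).map_eq_zero_of_eq (Function.update x j (x i)) (i := i) (j := j)]
      · rw [smul_zero]
      · rw [Function.update_self, Function.update_of_ne hij]
      · exact hij
    rw [Finset.sum_eq_single_of_mem j (Finset.mem_univ j) hterm] at h0
    rw [AlternatingMap.map_update_smul, Function.update_eq_self] at h0
    rcases smul_eq_zero.mp h0 with h | h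
    · exact absurd h hj
    · exact h
  · exact (wedge β β).map_linearDependent x hind

section Main

variable {V : Type*} [AddCommGroup V] [Module ℝ V]

/-- Pair independence from a complex structure. -/
lemma pair_indep (J : V →ₗ[ℝ] V) (hJ2 : ∀ v, J (J v) = -v) {v : V} (hv : v ≠ 0) :
    ∀ s t : ℝ, s • v + t • J v = 0 → s = 0 ∧ t = 0 := by
  intro s t hst
  have h2 : s • J v + t • J (J v) = 0 := by
    have := congrArg J hst
    simpa [map_add, map_smul] using this
  rw [hJ2] at h2
  have h3 : (s * s + t * t) • v = 0 := by
    have e1 : (s * s + t * t) • v = s • (s • v + t • J v) - t • (s • J v + t • -v) := by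
      module
    rw [e1, hst, h2, smul_zero, smul_zero, sub_zero]
  rcases smul_eq_zero.mp h3 with h | h
  · constructor <;> nlinarith
  · exact absurd h hv

/-- J-invariance of the plane spanned by `v, J v`. -/
lemma plane_J_invariant (J : V →ₗ[ℝ] V) (hJ2 : ∀ v, J (J v) = -v) (v : V) :
    ∀ x ∈ Submodule.span ℝ ({v, J v} : Set V), J x ∈ Submodule.span ℝ ({v, J v} : Set V) := by
  intro x hx
  obtain ⟨s, t, hst⟩ := Submodule.mem_span_pair.mp hx
  apply Submodule.mem_span_pair.mpr
  refine ⟨-t, s, ?_⟩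
  rw [← hst]
  simp only [map_add, map_smul, hJ2]
  module

/-- Quadruple independence. -/
lemma quad_indep (J : V →ₗ[ℝ] V) (hJ2 : ∀ v, J (J v) = -v) {v u : V} (hv : v ≠ 0)
    (hu : u ∉ Submodule.span ℝ ({v, J v} : Set V)) :
    ∀ c₀ c₁ c₂ c₃ : ℝ, c₀ • v + c₁ • J v + c₂ • u + c₃ • J u = 0 →
      c₀ = 0 ∧ c₁ = 0 ∧ c₂ = 0 ∧ c₃ = 0 := by
  intro c₀ c₁ c₂ c₃ heq
  set P := Submodule.span ℝ ({v, J v} : Set V) with hP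
  have hvP : v ∈ P := Submodule.subset_span (by simp)
  have hJvP : J v ∈ P := Submodule.subset_span (by simp)
  have hwP : c₂ • u + c₃ • J u ∈ P := by
    have : c₂ • u + c₃ • J u = -(c₀ • v + c₁ • J v) := by
      have := heq; abel_nf at this ⊢; linear_combination (norm := module) this
    rw [this]
    exact Submodule.neg_mem _ (Submodule.add_mem _ (Submodule.smul_mem _ _ hvP)
      (Submodule.smul_mem _ _ hJvP))
  have hc23 : c₂ = 0 ∧ c₃ = 0 := by
    by_contra hcon
    have hne : c₂ * c₂ + c₃ * c₃ ≠ 0 := by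
      intro h0
      apply hcon
      constructor <;> nlinarith
    apply hu
    have hJwP : J (c₂ • u + c₃ • J u) ∈ P := plane_J_invariant J hJ2 v _ hwP
    have hrep : u = (c₂ * c₂ + c₃ * c₃)⁻¹ •
        (c₂ • (c₂ • u + c₃ • J u) - c₃ • J (c₂ • u + c₃ • J u)) := by
      simp only [map_add, map_smul, hJ2]
      rw [smul_sub, smul_smul, smul_smul]
      field_simp
      have hne2 : c₂ ^ 2 + c₃ ^ 2 ≠ 0 := by rw [sq, sq]; exact hne
      match_scalars <;> field_simp <;> ring
    rw [hrep]
    exact Submodule.smul_mem _ _ (Submodule.sub_mem _ (Submodule.smul_mem _ _ hwP)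
      (Submodule.smul_mem _ _ hJwP))
  obtain ⟨h2, h3⟩ := hc23
  rw [h2, h3] at heq
  simp only [zero_smul, add_zero] at heq
  obtain ⟨h0, h1⟩ := pair_indep J hJ2 hv c₀ c₁ heq
  exact ⟨h0, h1, h2, h3⟩

end Main

/-- If `ω` is a 3-form on a 6-dimensional real vector space with `Δ(ω) = {0}`, `J` a complex
structure making `ω` pure, and `A` a linear map with
`ω(Av₁,v₂,v₃) = ω(v₁,Av₂,v₃) = ω(v₁,v₂,Av₃)`, then `A = λ₀•id + λ₁•J` for some reals
`λ₀, λ₁`; if moreover `A∘J + J∘A = 0`, then `A = 0`. -/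
theorem pure_endomorphism_eq_combination
    {V : Type*} [AddCommGroup V] [Module ℝ V] [FiniteDimensional ℝ V]
    (hV : Module.finrank ℝ V = 6)
    (ω : V [⋀^Fin 3]→ₗ[ℝ] ℝ) (hΔ : Delta ω = {0})
    (J : V →ₗ[ℝ] V) (hJ : J ∘ₗ J = -LinearMap.id)
    (hpure : ∀ v₁ v₂ v₃ : V,
      ω ![J v₁, v₂, v₃] = ω ![v₁, J v₂, v₃] ∧ ω ![v₁, J v₂, v₃] = ω ![v₁, v₂, J v₃])
    (A : V →ₗ[ℝ] V)
    (hA : ∀ v₁ v₂ v₃ : V,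
      ω ![A v₁, v₂, v₃] = ω ![v₁, A v₂, v₃] ∧ ω ![v₁, A v₂, v₃] = ω ![v₁, v₂, A v₃]) :
    (∃ l₀ l₁ : ℝ, A = l₀ • LinearMap.id + l₁ • J) ∧
      (A ∘ₗ J + J ∘ₗ A = 0 → A = 0) := by
  classical
  have hJ2 : ∀ v, J (J v) = -v := by
    intro v
    have := LinearMap.ext_iff.mp hJ v
    simpa using this
  -- swap lemma for the 3-form
  have hswap : ∀ a b c : V, ω ![a, b, c] = - ω ![b, a, c] := by
    intro a b c
    have := ω.map_swap ![b, a, c] (i := 0) (j := 1) (by decide)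
    have h2 : (![b, a, c] ∘ Equiv.swap (0:Fin 3) 1) = ![a, b, c] := by
      funext k; fin_cases k <;> simp [Equiv.swap_apply_of_ne_of_ne]
    rw [h2] at this
    linarith
  -- Step 1: A v lies in the plane spanned by v, J v
  have hspan : ∀ v : V, v ≠ 0 → A v ∈ Submodule.span ℝ ({v, J v} : Set V) := by
    intro v hv
    by_contra hAv
    -- the kernel of ι_v ω
    set β : V [⋀^Fin 2]→ₗ[ℝ] ℝ := iota v ω with hβ
    have hβval : ∀ u w : V, β ![u, w] = ω ![v, u, w] := fun u w => rfl
    set K : Submodule ℝ V := LinearMap.ker β.curryLeft with hKdef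
    have hKmem : ∀ u : V, (∀ w, β ![u, w] = 0) → u ∈ K := by
      intro u h
      rw [hKdef, LinearMap.mem_ker]
      ext w
      have : Matrix.vecCons u w = ![u, w 0] := by
        funext k; fin_cases k <;> rfl
      show β (Matrix.vecCons u w) = 0
      rw [this, h]
    have hKval : ∀ u ∈ K, ∀ w, β ![u, w] = 0 := by
      intro u hu w
      rw [hKdef, LinearMap.mem_ker] at hu
      have := AlternatingMap.congr_fun hu ![w]
      simpa using this
    -- v, J v, A v are in K
    have hvK : v ∈ K := by
      apply hKmem
      intro w
      rw [hβval]
      exact ω.map_eq_zero_of_eq ![v, v, w] (i := 0) (j := 1) rfl (by decide)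
    have hJvK : J v ∈ K := by
      apply hKmem
      intro w
      rw [hβval]
      have h1 := (hpure v v w).1
      have h2 := hswap (J v) v w
      linarith
    have hAvK : A v ∈ K := by
      apply hKmem
      intro w
      rw [hβval]
      have h1 := (hA v v w).1
      have h2 := hswap (A v) v w
      linarith
    -- the triple v, J v, A v is linearly independent
    have htriple : LinearIndependent ℝ ![v, J v, A v] := by
      rw [Fintype.linearIndependent_iff]
      intro g hg
      rw [Fin.sum_univ_three] at hg
      simp only [Matrix.cons_val_zero, Matrix.cons_val_one, Matrix.head_cons,
        Matrix.cons_val_two, Matrix.tail_cons] at hg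
      by_cases hg2 : g 2 = 0
      · rw [hg2, zero_smul, add_zero] at hg
        obtain ⟨h0, h1⟩ := pair_indep J hJ2 hv _ _ hg
        intro i; fin_cases i <;> simp [h0, h1, hg2]
      · exfalso
        apply hAv
        apply Submodule.mem_span_pair.mpr
        have key : g 2 • A v = (-(g 0)) • v + (-(g 1)) • J v := by
          linear_combination (norm := module) hg
        have hAveq : A v = (g 2)⁻¹ • ((-(g 0)) • v + (-(g 1)) • J v) := by
          rw [← key, smul_smul, inv_mul_cancel₀ hg2, one_smul]
        refine ⟨(g 2)⁻¹ * (-(g 0)), (g 2)⁻¹ * (-(g 1)), ?_⟩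
        rw [hAveq, smul_add, smul_smul, smul_smul]
    have hKrank : 3 ≤ Module.finrank ℝ K := by
      have hle : Submodule.span ℝ (Set.range ![v, J v, A v]) ≤ K := by
        rw [Submodule.span_le, Set.range_subset_iff]
        intro i; fin_cases i
        · exact hvK
        · exact hJvK
        · exact hAvK
      calc (3 : ℕ) = Module.finrank ℝ (Submodule.span ℝ (Set.range ![v, J v, A v])) := by
            rw [finrank_span_eq_card htriple]; simp
        _ ≤ Module.finrank ℝ K := Submodule.finrank_mono hle
    have hzero : wedge β β = 0 := wedge_self_eq_zero_of_kernel hV β K hKval hKrank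
    have : v ∈ Delta ω := hzero
    rw [hΔ] at this
    exact hv this
  -- decomposition function
  have hdecomp : ∀ v : V, v ≠ 0 → ∃ a b : ℝ, A v = a • v + b • J v := by
    intro v hv
    obtain ⟨a, b, hab⟩ := Submodule.mem_span_pair.mp (hspan v hv)
    exact ⟨a, b, hab.symm⟩
  -- step lemma: coefficients agree for "independent" pairs
  have hstep : ∀ v u : V, v ≠ 0 → u ∉ Submodule.span ℝ ({v, J v} : Set V) →
      ∀ a b a' b' : ℝ, A v = a • v + b • J v → A u = a' • u + b' • J u →
        a = a' ∧ b = b' := by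
    intro v u hv hu a b a' b' hAv hAu
    have hu0 : u ≠ 0 := fun h => hu (h ▸ Submodule.zero_mem _)
    have hvu : v + u ≠ 0 := by
      intro h
      apply hu
      have : u = -v := by linear_combination (norm := module) h
      rw [this]
      exact Submodule.neg_mem _ (Submodule.subset_span (by simp))
    obtain ⟨c, d, hcd⟩ := hdecomp (v + u) hvu
    rw [map_add, hAv, hAu, map_add] at hcd
    have heq : (a - c) • v + (b - d) • J v + (a' - c) • u + (b' - d) • J u = 0 := by
      linear_combination (norm := module) hcd
    obtain ⟨h0, h1, h2, h3⟩ := quad_indep J hJ2 hv hu _ _ _ _ heq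
    constructor <;> linarith [sub_eq_zero.mp (by linarith : a - c = 0)]
  -- pick a base point
  have hnt : Nontrivial V := Module.nontrivial_of_finrank_pos
    (R := ℝ) (M := V) (by omega)
  obtain ⟨v₀, hv₀⟩ := exists_ne (0 : V)
  obtain ⟨l₀, l₁, hl⟩ := hdecomp v₀ hv₀
  have hmain : A = l₀ • LinearMap.id + l₁ • J := by
    ext v
    simp only [LinearMap.add_apply, LinearMap.smul_apply, LinearMap.id_coe, id_eq]
    by_cases hv : v = 0
    · rw [hv]; simp
    · by_cases hvP : v ∈ Submodule.span ℝ ({v₀, J v₀} : Set V)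
      · have hex : ∃ w : V, w ∉ Submodule.span ℝ ({v₀, J v₀} : Set V) := by
          by_contra hall
          push_neg at hall
          have htop : Submodule.span ℝ ({v₀, J v₀} : Set V) = ⊤ :=
            Submodule.eq_top_iff'.mpr hall
          have h1 : Module.finrank ℝ (Submodule.span ℝ ({v₀, J v₀} : Set V)) ≤ 2 := by
            refine (finrank_span_le_card _).trans ?_
            rw [Set.toFinset_insert, Set.toFinset_singleton]
            exact (Finset.card_insert_le _ _).trans (by simp)
          rw [htop, finrank_top, hV] at h1
          omega
        obtain ⟨w, hw⟩ := hex
        obtain ⟨a, b, hab⟩ := hdecomp w (fun h => hw (h ▸ Submodule.zero_mem _))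
        have h1 := hstep v₀ w hv₀ hw l₀ l₁ a b hl hab
        have hsub : Submodule.span ℝ ({v, J v} : Set V) ≤
            Submodule.span ℝ ({v₀, J v₀} : Set V) := by
          rw [Submodule.span_le]
          rintro x hx
          rcases hx with h | h
          · rw [h]; exact hvP
          · rw [Set.mem_singleton_iff.mp h]
            exact plane_J_invariant J hJ2 v₀ v hvP
        have hwv : w ∉ Submodule.span ℝ ({v, J v} : Set V) := fun h => hw (hsub h)
        obtain ⟨c, d, hcd⟩ := hdecomp v hv
        have h2 := hstep v w hv hwv c d a b hcd hab
        rw [hcd, h2.1, h2.2, ← h1.1, ← h1.2]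
      · obtain ⟨a, b, hab⟩ := hdecomp v hv
        have h1 := hstep v₀ v hv₀ hvP l₀ l₁ a b hl hab
        rw [hab, ← h1.1, ← h1.2]
  refine ⟨⟨l₀, l₁, hmain⟩, fun hanti => ?_⟩
  have happ : (A ∘ₗ J + J ∘ₗ A) v₀ = (-(2 * l₁)) • v₀ + (2 * l₀) • J v₀ := by
    rw [hmain]
    simp only [LinearMap.add_apply, LinearMap.comp_apply, LinearMap.add_apply,
      LinearMap.smul_apply, LinearMap.id_coe, id_eq, map_add, map_smul]
    rw [hJ2]
    module
  rw [hanti] at happ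
  have h0 := (pair_indep J hJ2 hv₀ _ _ happ.symm)
  have hl₀ : l₀ = 0 := by linarith [h0.2]
  have hl₁ : l₁ = 0 := by linarith [h0.1]
  rw [hmain, hl₀, hl₁]
  simp
end

section
/- Let α₁,…,α₆ be the dual basis of the standard basis of ℝ⁶ and let ω₂ = α₁∧α₂∧α₃ + α₁∧α₄∧α₅ + α₂∧α₄∧α₆ − α₃∧α₅∧α₆. Then ω₂ is multisymplectic and Δ(ω₂) = {0}, i.e. ω₂ is of type 2. -/
open scoped TensorProduct

/-- The dual-basis 1-form `αᵢ` on `ℝⁿ`, as an alternating 1-form. -/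
noncomputable def basisOneForm {n : ℕ} (i : Fin n) : (Fin n → ℝ) [⋀^Fin 1]→ₗ[ℝ] ℝ :=
  AlternatingMap.ofSubsingleton ℝ (Fin n → ℝ) ℝ 0 (LinearMap.proj i)

/-- The alternating 3-form `αᵢ ∧ αⱼ ∧ αₖ` on `ℝⁿ`. -/
noncomputable def w3 {n : ℕ} (i j k : Fin n) : (Fin n → ℝ) [⋀^Fin 3]→ₗ[ℝ] ℝ :=
  wedge (wedge (basisOneForm i) (basisOneForm j)) (basisOneForm k)

open Equiv Finset in
lemma wedge_apply_aux {V : Type*} [AddCommGroup V] [Module ℝ V] {p q : ℕ}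
    (a : V [⋀^Fin p]→ₗ[ℝ] ℝ) (b : V [⋀^Fin q]→ₗ[ℝ] ℝ) (v : Fin (p + q) → V) :
    (p.factorial * q.factorial : ℕ) • wedge a b v =
      ∑ τ : Perm (Fin (p + q)), (Perm.sign τ : ℤ) •
        (a (fun i => v (τ (Fin.castAdd q i))) * b (fun j => v (τ (Fin.natAdd p j)))) := by
  classical
  set u : Fin p ⊕ Fin q → V := fun i => v (finSumFinEquiv i) with hu
  have h := MultilinearMap.domCoprod_alternization_eq a b
  simp only [Fintype.card_fin] at h
  have h2 : ((p.factorial * q.factorial : ℕ) • (a.domCoprod b)) u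
      = MultilinearMap.alternatization ((MultilinearMap.domCoprod a b : MultilinearMap ℝ (fun _ : Fin p ⊕ Fin q => V) (ℝ ⊗[ℝ] ℝ))) u := by
    rw [h]
  rw [MultilinearMap.alternatization_apply] at h2
  have h3 : (p.factorial * q.factorial : ℕ) • wedge a b v
      = LinearMap.mul' ℝ ℝ (((p.factorial * q.factorial : ℕ) • (a.domCoprod b)) u) := by
    simp only [wedge, AlternatingMap.domDomCongr_apply, LinearMap.compAlternatingMap_apply,
      AlternatingMap.smul_apply, map_nsmul]
    rfl
  rw [h3, h2, map_sum]
  refine Fintype.sum_equiv (Equiv.permCongr finSumFinEquiv) _ _ fun σ => ?_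
  simp only [MultilinearMap.domDomCongr_apply, MultilinearMap.domCoprod_apply,
    LinearMap.map_smul_of_tower, LinearMap.mul'_apply, Perm.sign_permCongr]
  have : ∀ z : ℝ, Perm.sign σ • z = (Perm.sign σ : ℤ) • z := fun z => rfl
  rw [this]
  congr 1
  congr 1
  · show a _ = a _
    congr 1
    funext i
    simp [hu, permCongr_apply]
  · show b _ = b _
    congr 1
    funext j
    simp [hu, permCongr_apply]
open Equiv in
lemma perm_sum_succ {n : ℕ} {M : Type*} [AddCommMonoid M] (f : Perm (Fin (n+1)) → M) :
    ∑ σ : Perm (Fin (n+1)), f σ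
      = ∑ i : Fin (n+1), ∑ σ : Perm (Fin n), f (Equiv.Perm.decomposeFin.symm (i, σ)) := by
  have h1 : ∑ σ : Perm (Fin (n+1)), f σ
      = ∑ p : Fin (n+1) × Perm (Fin n), f (Equiv.Perm.decomposeFin.symm p) :=
    Fintype.sum_equiv Equiv.Perm.decomposeFin _ _ (fun σ => by simp)
  rw [h1, Fintype.sum_prod_type]

open Equiv in
lemma perm_sum_zero {M : Type*} [AddCommMonoid M] (f : Perm (Fin 0) → M) :
    ∑ σ : Perm (Fin 0), f σ = f 1 :=
  Fintype.sum_subsingleton f 1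


open Equiv in

open Equiv in
lemma perm_sum_one {M : Type*} [AddCommMonoid M] (f : Perm (Fin 1) → M) :
    ∑ σ : Perm (Fin 1), f σ = f 1 :=
  Fintype.sum_subsingleton f 1

open Equiv in
lemma decomposeFin_symm_apply_two {n : ℕ} (p : Fin (n+3)) (e : Perm (Fin (n+2))) :
    Equiv.Perm.decomposeFin.symm (p, e) 2 = Equiv.swap 0 p (e 1).succ := by
  rw [← Fin.succ_one_eq_two, Equiv.Perm.decomposeFin_symm_apply_succ]

open Equiv in
lemma decomposeFin_symm_apply_three (p : Fin 4) (e : Perm (Fin 3)) :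
    Equiv.Perm.decomposeFin.symm (p, e) 3 = Equiv.swap 0 p (e 2).succ := by
  have h32 : (3 : Fin 4) = (2 : Fin 3).succ := by decide
  rw [h32, Equiv.Perm.decomposeFin_symm_apply_succ]

lemma alt2_swap {V : Type*} [AddCommGroup V] [Module ℝ V]
    (a : V [⋀^Fin 2]→ₗ[ℝ] ℝ) (x y : V) : a ![y, x] = - a ![x, y] := by
  have h : (![y, x] : Fin 2 → V) = ![x, y] ∘ Equiv.swap 0 1 := by
    funext i; fin_cases i <;> rfl
  rw [h, AlternatingMap.map_swap a _ (by decide)]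

open Equiv in
lemma wedge11 {V : Type*} [AddCommGroup V] [Module ℝ V]
    (a b : V [⋀^Fin 1]→ₗ[ℝ] ℝ) (v : Fin 2 → V) :
    wedge a b v = a ![v 0] * b ![v 1] - a ![v 1] * b ![v 0] := by
  have h := wedge_apply_aux a b v
  have e1 : ∀ (f : Fin 2 → Fin 2), (a fun i => v (f (Fin.castAdd 1 i))) = a ![v (f 0)] := by
    intro f; congr 1; funext i; fin_cases i <;> rfl
  have e2 : ∀ (f : Fin 2 → Fin 2), (b fun j => v (f (Fin.natAdd 1 j))) = b ![v (f 1)] := by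
    intro f; congr 1; funext i; fin_cases i <;> rfl
  simp only [perm_sum_succ, perm_sum_one, e1, e2, Fin.sum_univ_succ, Fin.sum_univ_zero] at h
  simp [Equiv.Perm.decomposeFin.symm_sign, Equiv.Perm.decomposeFin_symm_apply_zero,
    Equiv.Perm.decomposeFin_symm_of_one, Equiv.swap_apply_def, Fin.ext_iff] at h
  linarith

open Equiv in
lemma wedge21 {V : Type*} [AddCommGroup V] [Module ℝ V]
    (a : V [⋀^Fin 2]→ₗ[ℝ] ℝ) (b : V [⋀^Fin 1]→ₗ[ℝ] ℝ) (v : Fin 3 → V) :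
    wedge a b v = a ![v 0, v 1] * b ![v 2] - a ![v 0, v 2] * b ![v 1]
      + a ![v 1, v 2] * b ![v 0] := by
  have h := wedge_apply_aux a b v
  have e1 : ∀ (f : Fin 3 → Fin 3), (a fun i => v (f (Fin.castAdd 1 i))) = a ![v (f 0), v (f 1)] := by
    intro f; congr 1; funext i; fin_cases i <;> rfl
  have e2 : ∀ (f : Fin 3 → Fin 3), (b fun j => v (f (Fin.natAdd 2 j))) = b ![v (f 2)] := by
    intro f; congr 1; funext i; fin_cases i <;> rfl
  simp only [perm_sum_succ, perm_sum_one, e1, e2, Fin.sum_univ_succ, Fin.sum_univ_zero] at h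
  simp [Equiv.Perm.decomposeFin.symm_sign, Equiv.Perm.decomposeFin_symm_apply_zero,
    Equiv.Perm.decomposeFin_symm_apply_succ, Equiv.Perm.decomposeFin_symm_apply_one,
    Equiv.Perm.decomposeFin_symm_of_one,
    decomposeFin_symm_apply_two, Fin.succ_zero_eq_one, Fin.succ_one_eq_two,
    Equiv.swap_apply_def, Fin.ext_iff] at h
  rw [show a ![v 1, v 0] = - a ![v 0, v 1] from alt2_swap a _ _,
    show a ![v 2, v 0] = - a ![v 0, v 2] from alt2_swap a _ _,
    show a ![v 2, v 1] = - a ![v 1, v 2] from alt2_swap a _ _] at h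
  linarith

open Equiv in
lemma wedge22 {V : Type*} [AddCommGroup V] [Module ℝ V]
    (a b : V [⋀^Fin 2]→ₗ[ℝ] ℝ) (v : Fin 4 → V) :
    (2:ℝ) * wedge a b v =
      2 * (a ![v 0, v 1] * b ![v 2, v 3] - a ![v 0, v 2] * b ![v 1, v 3]
      + a ![v 0, v 3] * b ![v 1, v 2] + a ![v 1, v 2] * b ![v 0, v 3]
      - a ![v 1, v 3] * b ![v 0, v 2] + a ![v 2, v 3] * b ![v 0, v 1]) := by
  have h := wedge_apply_aux a b v
  have e1 : ∀ (f : Fin 4 → Fin 4), (a fun i => v (f (Fin.castAdd 2 i))) = a ![v (f 0), v (f 1)] := by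
    intro f; congr 1; funext i; fin_cases i <;> rfl
  have e2 : ∀ (f : Fin 4 → Fin 4), (b fun j => v (f (Fin.natAdd 2 j))) = b ![v (f 2), v (f 3)] := by
    intro f; congr 1; funext i; fin_cases i <;> rfl
  simp only [perm_sum_succ, perm_sum_one, e1, e2, Fin.sum_univ_succ, Fin.sum_univ_zero] at h
  simp [Equiv.Perm.decomposeFin.symm_sign, Equiv.Perm.decomposeFin_symm_apply_zero,
    Equiv.Perm.decomposeFin_symm_apply_succ, Equiv.Perm.decomposeFin_symm_apply_one,
    Equiv.Perm.decomposeFin_symm_of_one,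
    decomposeFin_symm_apply_two, decomposeFin_symm_apply_three,
    Fin.succ_zero_eq_one, Fin.succ_one_eq_two,
    Equiv.swap_apply_def, Fin.ext_iff] at h
  simp only [alt2_swap a (v 0) (v 1), alt2_swap a (v 0) (v 2), alt2_swap a (v 0) (v 3),
    alt2_swap a (v 1) (v 2), alt2_swap a (v 1) (v 3), alt2_swap a (v 2) (v 3),
    alt2_swap b (v 0) (v 1), alt2_swap b (v 0) (v 2), alt2_swap b (v 0) (v 3),
    alt2_swap b (v 1) (v 2), alt2_swap b (v 1) (v 3), alt2_swap b (v 2) (v 3)] at h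
  linarith

lemma basisOneForm_apply {n : ℕ} (i : Fin n) (x : Fin n → ℝ) :
    basisOneForm i ![x] = x i := by
  simp [basisOneForm]

lemma w3_apply {n : ℕ} (i j k : Fin n) (x y z : Fin n → ℝ) :
    w3 i j k ![x, y, z] =
      (x i * y j - y i * x j) * z k - (x i * z j - z i * x j) * y k
        + (y i * z j - z i * y j) * x k := by
  rw [w3, wedge21]
  simp [wedge11, basisOneForm_apply, Matrix.cons_val_zero, Matrix.cons_val_one]

lemma iota_sub {V : Type*} [AddCommGroup V] [Module ℝ V] {n : ℕ}
    (v w : V) (ω : V [⋀^Fin (n + 1)]→ₗ[ℝ] ℝ) :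
    iota (v - w) ω = iota v ω - iota w ω :=
  map_sub ω.curryLeft v w

lemma iota_zero {V : Type*} [AddCommGroup V] [Module ℝ V] {n : ℕ}
    (ω : V [⋀^Fin (n + 1)]→ₗ[ℝ] ℝ) : iota (0 : V) ω = 0 :=
  map_zero ω.curryLeft

lemma wedge_zero22 {V : Type*} [AddCommGroup V] [Module ℝ V] :
    wedge (0 : V [⋀^Fin 2]→ₗ[ℝ] ℝ) (0 : V [⋀^Fin 2]→ₗ[ℝ] ℝ) = 0 := by
  ext v
  have h := wedge22 (0 : V [⋀^Fin 2]→ₗ[ℝ] ℝ) 0 v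
  simp only [AlternatingMap.zero_apply, mul_zero, zero_mul, sub_zero, add_zero,
    zero_sub, neg_zero, zero_add] at h ⊢
  linarith

def E (i : Fin 6) : Fin 6 → ℝ := fun k => if k = i then (1:ℝ) else 0

@[simp] lemma E_apply (i k : Fin 6) : E i k = if k = i then (1:ℝ) else 0 := rfl


set_option maxHeartbeats 1000000

/-- The standard type-2 form
`ω₂ = α₁∧α₂∧α₃ + α₁∧α₄∧α₅ + α₂∧α₄∧α₆ − α₃∧α₅∧α₆` on `ℝ⁶` is multisymplectic and
satisfies `Δ(ω₂) = {0}`, i.e. it is of type 2. -/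
theorem omega2_multisymplectic_type2 :
    Multisymplectic (w3 0 1 2 + w3 0 3 4 + w3 1 3 5 - w3 2 4 5 :
        (Fin 6 → ℝ) [⋀^Fin 3]→ₗ[ℝ] ℝ) ∧
      Delta (w3 0 1 2 + w3 0 3 4 + w3 1 3 5 - w3 2 4 5 :
        (Fin 6 → ℝ) [⋀^Fin 3]→ₗ[ℝ] ℝ) = {0} := by
  set ω : (Fin 6 → ℝ) [⋀^Fin 3]→ₗ[ℝ] ℝ := w3 0 1 2 + w3 0 3 4 + w3 1 3 5 - w3 2 4 5 with hω
  have omega_eval : ∀ x y z : Fin 6 → ℝ, ω ![x, y, z] =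
      ((x 0 * y 1 - y 0 * x 1) * z 2 - (x 0 * z 1 - z 0 * x 1) * y 2
        + (y 0 * z 1 - z 0 * y 1) * x 2)
      + ((x 0 * y 3 - y 0 * x 3) * z 4 - (x 0 * z 3 - z 0 * x 3) * y 4
        + (y 0 * z 3 - z 0 * y 3) * x 4)
      + ((x 1 * y 3 - y 1 * x 3) * z 5 - (x 1 * z 3 - z 1 * x 3) * y 5
        + (y 1 * z 3 - z 1 * y 3) * x 5)
      - ((x 2 * y 4 - y 2 * x 4) * z 5 - (x 2 * z 4 - z 2 * x 4) * y 5
        + (y 2 * z 4 - z 2 * y 4) * x 5) := by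
    intro x y z
    rw [hω]
    simp only [AlternatingMap.sub_apply, AlternatingMap.add_apply, w3_apply]
  have key : ∀ u : Fin 6 → ℝ, iota u ω = 0 → u = 0 := by
    intro u hu
    have h' : ∀ x y : Fin 6 → ℝ, ω ![u, x, y] = 0 := by
      intro x y
      have := congrArg (fun F : (Fin 6 → ℝ) [⋀^Fin 2]→ₗ[ℝ] ℝ => F ![x, y]) hu
      simpa [iota] using this
    have h0 := h' (E 1) (E 2)
    have h1 := h' (E 3) (E 5)
    have h2 := h' (E 0) (E 1)
    have h3 := h' (E 0) (E 4)
    have h4 := h' (E 0) (E 3)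
    have h5 := h' (E 1) (E 3)
    rw [omega_eval] at h0 h1 h2 h3 h4 h5
    norm_num at h0 h1 h2 h3 h4 h5
    funext k
    fin_cases k <;> simp_all
  constructor
  · intro v w hvw
    have h : iota (v - w) ω = 0 := by
      rw [iota_sub]
      simp only at hvw
      rw [hvw, sub_self]
    have := key _ h
    exact sub_eq_zero.mp this
  · ext v
    simp only [Delta, Set.mem_setOf_eq, Set.mem_singleton_iff]
    constructor
    · intro h
      have hq : ∀ x y z w : Fin 6 → ℝ,
          0 = 2 * (ω ![v,x,y] * ω ![v,z,w] - ω ![v,x,z] * ω ![v,y,w]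
            + ω ![v,x,w] * ω ![v,y,z] + ω ![v,y,z] * ω ![v,x,w]
            - ω ![v,y,w] * ω ![v,x,z] + ω ![v,z,w] * ω ![v,x,y]) := by
        intro x y z w
        have h22 := wedge22 (iota v ω) (iota v ω) ![x, y, z, w]
        rw [h] at h22
        simpa [iota] using h22
      have hq1 := hq (E 0) (E 1) (E 4) (E 5)
      have hq2 := hq (E 0) (E 2) (E 3) (E 5)
      have hq3 := hq (E 1) (E 2) (E 3) (E 4)
      simp only [omega_eval, E_apply] at hq1 hq2 hq3
      simp (config := { decide := true }) only [] at hq1 hq2 hq3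
      norm_num at hq1 hq2 hq3
      have h0 : v 0 = 0 := by nlinarith [sq_nonneg (v 0), sq_nonneg (v 5)]
      have h5 : v 5 = 0 := by nlinarith [sq_nonneg (v 0), sq_nonneg (v 5)]
      have h1 : v 1 = 0 := by nlinarith [sq_nonneg (v 1), sq_nonneg (v 4)]
      have h4 : v 4 = 0 := by nlinarith [sq_nonneg (v 1), sq_nonneg (v 4)]
      have h2 : v 2 = 0 := by nlinarith [sq_nonneg (v 2), sq_nonneg (v 3)]
      have h3 : v 3 = 0 := by nlinarith [sq_nonneg (v 2), sq_nonneg (v 3)]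
      funext k
      fin_cases k <;> simp_all
    · intro h
      rw [h, iota_zero, wedge_zero22]
end
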